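/- Let p ∈ ℝ[x_1,…,x_d] be any polynomial of degree m. Then there exist an integer n ≥ m and real symmetric n×n matrices A_0, A_1, …, A_d such that det(A_0 + x_1 A_1 + ⋯ + x_d A_d) = p(x) as polynomials in x_1,…,x_d. -/

import Mathlib

set_option linter.unusedSectionVars false

open MvPolynomial Matrix

section Aux


lemma single_of_sum_le_one {d : ℕ} {s : Fin d →₀ ℕ} (h1 : s.sum (fun _ e => e) ≤ 1)
    (h0 : s ≠ 0) : ∃ i, s = Finsupp.single i 1 := by
  obtain ⟨i, hi⟩ := Finsupp.support_nonempty_iff.mpr h0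
  have hii : s i ≠ 0 := Finsupp.mem_support_iff.mp hi
  have hle : s i ≤ s.sum (fun _ e => e) := by
    rw [Finsupp.sum]
    exact Finset.single_le_sum (fun _ _ => Nat.zero_le _) hi
  refine ⟨i, ?_⟩
  ext j
  rcases eq_or_ne j i with rfl | hj
  · simp only [Finsupp.single_eq_same]
    omega
  · simp only [Finsupp.single_eq_of_ne' (Ne.symm hj)]
    by_contra hjz
    have hjmem : j ∈ s.support := Finsupp.mem_support_iff.mpr hjz
    have : s i + s j ≤ s.sum (fun _ e => e) := by
      rw [Finsupp.sum]
      have := Finset.sum_le_sum_of_subset (f := fun x => s x)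
        (show ({i, j} : Finset (Fin d)) ⊆ s.support by
          intro x hx
          simp only [Finset.mem_insert, Finset.mem_singleton] at hx
          rcases hx with rfl | rfl <;> [exact hi; exact hjmem])
      rwa [Finset.sum_pair (Ne.symm hj)] at this
    omega

lemma affine_eq {d : ℕ} (p : MvPolynomial (Fin d) ℝ) (h : p.totalDegree ≤ 1) :
    p = C (coeff 0 p) + ∑ i, X i * C (coeff (Finsupp.single i 1) p) := by
  have hXC : ∀ (i : Fin d) (b : ℝ), X i * C b = monomial (Finsupp.single i 1) b := by
    intro i b
    rw [C_apply, X, monomial_mul, add_zero, one_mul]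
  ext s
  rw [coeff_add, coeff_C]
  simp only [hXC]
  rw [MvPolynomial.coeff_sum]
  simp only [coeff_monomial]
  rcases eq_or_ne s 0 with rfl | hs0
  · simp [Finsupp.single_eq_zero]
  · rw [if_neg (Ne.symm hs0), zero_add]
    by_cases hex : ∃ i, s = Finsupp.single i 1
    · obtain ⟨i0, rfl⟩ := hex
      rw [Finset.sum_eq_single i0]
      · simp
      · intro b _ hb
        rw [if_neg]
        intro hc
        exact hb ((Finsupp.single_left_inj one_ne_zero).mp hc)
      · simp
    · have hns : coeff s p = 0 := by
        by_contra hc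
        have hmem : s ∈ p.support := MvPolynomial.mem_support_iff.mpr hc
        have := (MvPolynomial.le_totalDegree hmem).trans h
        exact hex (single_of_sum_le_one this hs0)
      rw [hns, Finset.sum_eq_zero]
      intro i _
      rw [if_neg]
      intro hc
      exact hex ⟨i, hc.symm⟩

/-- `q` has a symmetric affine determinantal representation over some finite index type. -/
def DRep {d : ℕ} (q : MvPolynomial (Fin d) ℝ) : Prop :=
  ∃ (I : Type) (_ : Fintype I) (_ : DecidableEq I) (P : Matrix I I (MvPolynomial (Fin d) ℝ)),
    P.IsSymm ∧ (∀ i j, (P i j).totalDegree ≤ 1) ∧ P.det = q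

lemma DRep.scale {d : ℕ} {q : MvPolynomial (Fin d) ℝ} (c : ℝ) (hq : DRep q) :
    DRep (C c * q) := by
  obtain ⟨I, hF, hD, P, hs, hdeg, hdet⟩ := hq
  letI := hF; letI := hD
  refine ⟨I ⊕ Unit, inferInstance, inferInstance,
    fromBlocks P 0 0 (Matrix.of fun _ _ => (C c : MvPolynomial (Fin d) ℝ)), ?_, ?_, ?_⟩
  · rw [Matrix.IsSymm, fromBlocks_transpose, transpose_zero, transpose_zero, hs]
    congr 1
  · rintro (i | i) (j | j)
    · exact hdeg i j
    · simp [fromBlocks]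
    · simp [fromBlocks]
    · simp [fromBlocks, totalDegree_C]
  · rw [det_fromBlocks_zero₂₁, hdet, det_unique, mul_comm]
    rfl

variable {d : ℕ} {I : Type} [Fintype I] [DecidableEq I]

/-- `M = B * diag(±1) * Bᵀ` with entries of `B` of total degree ≤ e. -/
def Gram (e : ℕ) (M : Matrix I I (MvPolynomial (Fin d) ℝ)) : Prop :=
  ∃ (J : Type) (_ : Fintype J) (_ : DecidableEq J)
    (B : Matrix I J (MvPolynomial (Fin d) ℝ)) (ε : J → ℝ),
    (∀ i j, (B i j).totalDegree ≤ e) ∧ (∀ j, ε j = 1 ∨ ε j = -1) ∧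
    M = B * (Matrix.diagonal fun j => (C (ε j) : MvPolynomial (Fin d) ℝ)) * Bᵀ

lemma Gram.zero (e : ℕ) : Gram e (0 : Matrix I I (MvPolynomial (Fin d) ℝ)) := by
  refine ⟨Empty, inferInstance, inferInstance, 0, fun j => 1, ?_, fun j => Or.inl rfl, ?_⟩
  · intro i j; simp
  · rw [Matrix.zero_mul, Matrix.zero_mul]

lemma Gram.add {e : ℕ} {M N : Matrix I I (MvPolynomial (Fin d) ℝ)}
    (hM : Gram e M) (hN : Gram e N) : Gram e (M + N) := by
  obtain ⟨J₁, hF₁, hD₁, B₁, ε₁, hB₁, hε₁, h₁⟩ := hM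
  obtain ⟨J₂, hF₂, hD₂, B₂, ε₂, hB₂, hε₂, h₂⟩ := hN
  letI := hF₁; letI := hD₁; letI := hF₂; letI := hD₂
  refine ⟨J₁ ⊕ J₂, inferInstance, inferInstance, fromCols B₁ B₂, Sum.elim ε₁ ε₂,
    ?_, ?_, ?_⟩
  · rintro i (j | j)
    · exact hB₁ i j
    · exact hB₂ i j
  · rintro (j | j)
    · exact hε₁ j
    · exact hε₂ j
  · have hdiag : (Matrix.diagonal fun j => (C (Sum.elim ε₁ ε₂ j) : MvPolynomial (Fin d) ℝ)) =
        fromBlocks (Matrix.diagonal fun j => C (ε₁ j)) 0 0 (Matrix.diagonal fun j => C (ε₂ j)) := by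
      ext (j | j) (k | k) <;>
        simp [Matrix.diagonal_apply, Matrix.fromBlocks]
    rw [hdiag, fromCols_mul_fromBlocks, transpose_fromCols, fromCols_mul_fromRows]
    rw [Matrix.mul_zero, Matrix.mul_zero, add_zero, zero_add, h₁, h₂]

lemma Gram.sum {e : ℕ} {α : Type*} (s : Finset α)
    (f : α → Matrix I I (MvPolynomial (Fin d) ℝ)) (h : ∀ a ∈ s, Gram e (f a)) :
    Gram e (∑ a ∈ s, f a) := by
  classical
  induction s using Finset.induction_on with
  | empty => simpa using Gram.zero e
  | insert _ _ hni ih =>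
    rw [Finset.sum_insert hni]
    exact Gram.add (h _ (Finset.mem_insert_self _ _))
      (ih fun a ha => h a (Finset.mem_insert_of_mem ha))

lemma Gram.gen (e : ℕ) (i j : I) (a b : MvPolynomial (Fin d) ℝ)
    (ha : a.totalDegree ≤ e) (hb : b.totalDegree ≤ e) :
    Gram e (Matrix.single i j (2 * a * b) + Matrix.single j i (2 * a * b)) := by
  set δ : I → I → MvPolynomial (Fin d) ℝ := fun x k => if x = k then 1 else 0 with hδ
  have hδd : ∀ x k, (δ x k).totalDegree = 0 := by
    intro x k; rw [hδ]; dsimp only; split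
    · exact totalDegree_one
    · exact totalDegree_zero
  refine ⟨Bool, inferInstance, inferInstance,
    Matrix.of fun k c => if c then a * δ i k + b * δ j k else a * δ i k - b * δ j k,
    fun c => if c then 1 else -1, ?_, ?_, ?_⟩
  · intro k c
    have h1 : (a * δ i k).totalDegree ≤ e := by
      refine (totalDegree_mul _ _).trans ?_
      rw [hδd, add_zero]; exact ha
    have h2 : (b * δ j k).totalDegree ≤ e := by
      refine (totalDegree_mul _ _).trans ?_
      rw [hδd, add_zero]; exact hb
    cases c
    · simp only [Matrix.of_apply, if_neg Bool.false_ne_true]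
      rw [sub_eq_add_neg]
      refine (totalDegree_add _ _).trans ?_
      rw [totalDegree_neg]
      exact max_le h1 h2
    · simp only [Matrix.of_apply, if_pos trivial]
      exact (totalDegree_add _ _).trans (max_le h1 h2)
  · intro c
    cases c
    · exact Or.inr rfl
    · exact Or.inl rfl
  · refine Matrix.ext fun k l => ?_
    rw [Matrix.mul_apply]
    simp only [Matrix.mul_diagonal, Matrix.transpose_apply, Fintype.sum_bool,
      Matrix.of_apply, if_pos trivial, if_neg Bool.false_ne_true,
      Matrix.add_apply, Matrix.single, Matrix.of_apply]
    have key : ∀ (x y : I) (q : MvPolynomial (Fin d) ℝ), (if x = k ∧ y = l then q else 0)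
        = q * δ x k * δ y l := by
      intro x y q
      rw [hδ]; dsimp only
      by_cases h1 : x = k <;> by_cases h2 : y = l <;> simp [h1, h2]
    rw [key i j, key j i, MvPolynomial.C_1, map_neg, MvPolynomial.C_1]
    ring

lemma Gram.monomial (e : ℕ) (he : 1 ≤ e) (i j : I) (s : Fin d →₀ ℕ) (c : ℝ)
    (hs : s.sum (fun _ n => n) ≤ e + 1) :
    Gram e (Matrix.single i j (MvPolynomial.monomial s c)
      + Matrix.single j i (MvPolynomial.monomial s c)) := by
  rcases eq_or_ne s 0 with rfl | hs0
  · have h2ab : 2 * (C (c/2) : MvPolynomial (Fin d) ℝ) * 1 = MvPolynomial.monomial 0 c := by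
      rw [mul_one, ← C_apply, ← map_ofNat (C : ℝ →+* MvPolynomial (Fin d) ℝ) 2, ← C_mul]
      congr 1
      ring
    rw [← h2ab]
    exact Gram.gen e i j _ _ (by rw [totalDegree_C]; omega) (by rw [totalDegree_one]; omega)
  · obtain ⟨i0, hi0⟩ := Finsupp.support_nonempty_iff.mpr hs0
    have hi0' : s i0 ≠ 0 := Finsupp.mem_support_iff.mp hi0
    have hle : Finsupp.single i0 1 ≤ s :=
      Finsupp.single_le_iff.mpr (Nat.one_le_iff_ne_zero.mpr hi0')
    set t := s - Finsupp.single i0 1 with ht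
    have hts : t + Finsupp.single i0 1 = s := tsub_add_cancel_of_le hle
    have hsum : t.sum (fun _ n => n) + 1 = s.sum (fun _ n => n) := by
      rw [← hts, Finsupp.sum_add_index' (fun _ => rfl) (fun _ _ _ => rfl),
        Finsupp.sum_single_index rfl]
    have h2ab : 2 * (MvPolynomial.monomial t (c/2) : MvPolynomial (Fin d) ℝ) * X i0
        = MvPolynomial.monomial s c := by
      rw [← map_ofNat (C : ℝ →+* MvPolynomial (Fin d) ℝ) 2, C_mul_monomial, X,
        monomial_mul, hts]
      congr 1
      ring
    rw [← h2ab]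
    refine Gram.gen e i j _ _ ?_ ?_
    · refine (totalDegree_monomial_le _ _).trans ?_
      show (t.sum fun _ n => n) ≤ e
      omega
    · rw [totalDegree_X]; omega

lemma Gram.entry (e : ℕ) (he : 1 ≤ e) (i j : I) (q : MvPolynomial (Fin d) ℝ)
    (hq : q.totalDegree ≤ e + 1) :
    Gram e (Matrix.single i j q + Matrix.single j i q) := by
  have hstd : ∀ (x y : I), Matrix.single x y q
      = ∑ s ∈ q.support, Matrix.single x y (MvPolynomial.monomial s (coeff s q)) := by
    intro x y
    let F : MvPolynomial (Fin d) ℝ →+ Matrix I I (MvPolynomial (Fin d) ℝ) :=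
      AddMonoidHom.mk' (fun c => Matrix.single x y c) (fun a b => Matrix.single_add x y a b)
    calc Matrix.single x y q = F q := rfl
      _ = F (∑ s ∈ q.support, MvPolynomial.monomial s (coeff s q)) := by
          rw [support_sum_monomial_coeff]
      _ = _ := map_sum F _ _
  rw [hstd i j, hstd j i, ← Finset.sum_add_distrib]
  refine Gram.sum _ _ fun s hs => ?_
  exact Gram.monomial e he i j s _ ((MvPolynomial.le_totalDegree hs).trans hq)

lemma Gram.ofSymm (e : ℕ) (he : 1 ≤ e) (M : Matrix I I (MvPolynomial (Fin d) ℝ))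
    (hsym : M.IsSymm) (hdeg : ∀ i j, (M i j).totalDegree ≤ e + 1) : Gram e M := by
  have hhalf : ∀ q : MvPolynomial (Fin d) ℝ, C (1/2 : ℝ) * q + C (1/2 : ℝ) * q = q := by
    intro q
    rw [← add_mul, ← map_add]
    norm_num
  have hM : M = ∑ i : I, ∑ j : I,
      (Matrix.single i j (C (1/2 : ℝ) * M i j) + Matrix.single j i (C (1/2 : ℝ) * M i j)) := by
    have h1 : ∀ (N : Matrix I I (MvPolynomial (Fin d) ℝ)),
        (∑ i : I, ∑ j : I, Matrix.single i j (N i j)) = N :=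
      fun N => (matrix_eq_sum_single N).symm
    calc M = ∑ i : I, ∑ j : I, Matrix.single i j (M i j) := (h1 M).symm
      _ = ∑ i : I, ∑ j : I,
          (Matrix.single i j (C (1/2 : ℝ) * M i j) + Matrix.single i j (C (1/2 : ℝ) * M i j)) := by
          refine Finset.sum_congr rfl fun i _ => Finset.sum_congr rfl fun j _ => ?_
          rw [← Matrix.single_add, hhalf]
      _ = (∑ i : I, ∑ j : I, Matrix.single i j (C (1/2 : ℝ) * M i j))
          + ∑ i : I, ∑ j : I, Matrix.single i j (C (1/2 : ℝ) * M i j) := by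
          rw [← Finset.sum_add_distrib]
          refine Finset.sum_congr rfl fun i _ => Finset.sum_add_distrib
      _ = (∑ i : I, ∑ j : I, Matrix.single i j (C (1/2 : ℝ) * M i j))
          + ∑ i : I, ∑ j : I, Matrix.single j i (C (1/2 : ℝ) * M i j) := by
          congr 1
          rw [Finset.sum_comm]
          refine Finset.sum_congr rfl fun i _ => Finset.sum_congr rfl fun j _ => ?_
          rw [hsym.apply]
      _ = _ := by
          rw [← Finset.sum_add_distrib]
          refine Finset.sum_congr rfl fun i _ => ?_
          rw [← Finset.sum_add_distrib]
  rw [hM]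
  refine Gram.sum _ _ fun i _ => Gram.sum _ _ fun j _ => ?_
  refine Gram.entry e he i j _ ?_
  refine (totalDegree_mul _ _).trans ?_
  rw [totalDegree_C, zero_add]
  exact hdeg i j

lemma main {d : ℕ} (e : ℕ) : ∀ {I : Type} [Fintype I] [DecidableEq I]
    (M : Matrix I I (MvPolynomial (Fin d) ℝ)), M.IsSymm →
    (∀ i j, (M i j).totalDegree ≤ e) → DRep M.det := by
  induction e using Nat.strong_induction_on with
  | _ e ih =>
    intro I instF instD M hsym hdeg
    rcases le_or_gt e 1 with he | he
    · exact ⟨I, instF, instD, M, hsym, fun i j => (hdeg i j).trans he, rfl⟩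
    · set f := e - 1 with hf
      have h1f : 1 ≤ f := by omega
      have hef : f < e := by omega
      have he1 : f + 1 = e := by omega
      have hGram : Gram f M := Gram.ofSymm f h1f M hsym (fun i j => (hdeg i j).trans (by omega))
      obtain ⟨J, hFJ, hDJ, B, ε, hB, hε, hM⟩ := hGram
      letI := hFJ; letI := hDJ
      set D : Matrix J J (MvPolynomial (Fin d) ℝ) :=
        Matrix.diagonal (fun j => C (ε j)) with hD
      set M' : Matrix (I ⊕ J) (I ⊕ J) (MvPolynomial (Fin d) ℝ) :=
        fromBlocks 0 B Bᵀ (-D) with hM'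
      have hsym' : M'.IsSymm := by
        rw [Matrix.IsSymm, hM', fromBlocks_transpose, transpose_zero, transpose_transpose,
          transpose_neg, hD, diagonal_transpose]
      have hdeg' : ∀ i j, (M' i j).totalDegree ≤ f := by
        rintro (i | i) (j | j)
        · simp [hM', fromBlocks]
        · exact hB i j
        · exact hB j i
        · rw [hM']
          simp only [fromBlocks_apply₂₂, Matrix.neg_apply, totalDegree_neg, hD]
          rcases eq_or_ne i j with rfl | hij
          · rw [Matrix.diagonal_apply_eq, totalDegree_C]; omega
          · rw [Matrix.diagonal_apply_ne _ hij, totalDegree_zero]; omega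
      have hrep : DRep M'.det := ih f hef M' hsym' hdeg'
      -- compute det M'
      have hDD : (-D) * (-D) = 1 := by
        rw [Matrix.neg_mul, Matrix.mul_neg, neg_neg, hD, diagonal_mul_diagonal]
        have : ∀ j, (C (ε j) : MvPolynomial (Fin d) ℝ) * C (ε j) = 1 := by
          intro j
          rw [← C_mul]
          rcases hε j with h | h <;> rw [h] <;> norm_num
        rw [show (fun j => (C (ε j) : MvPolynomial (Fin d) ℝ) * C (ε j)) = fun _ => 1 from
          funext this, Matrix.diagonal_one]
      letI : Invertible (-D) := ⟨-D, hDD, hDD⟩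
      have hinvof : ⅟(-D) = -D := invOf_eq_right_inv hDD
      have hdet' : M'.det = (-D).det * M.det := by
        rw [hM', det_fromBlocks₂₂, hinvof]
        congr 1
        rw [Matrix.mul_neg, Matrix.neg_mul, zero_sub, neg_neg, hM]
      set c : ℝ := ∏ j : J, (-ε j) with hc
      have hdetD : (-D).det = C c := by
        rw [hD, Matrix.diagonal_neg, Matrix.det_diagonal, hc, map_prod]
        refine Finset.prod_congr rfl fun j _ => ?_
        rw [map_neg]
      have hcc : c * c = 1 := by
        rw [hc, ← Finset.prod_mul_distrib]
        refine Finset.prod_eq_one fun j _ => ?_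
        rcases hε j with h | h <;> rw [h] <;> norm_num
      rw [hdet', hdetD] at hrep
      have hrep2 := hrep.scale c
      rwa [← mul_assoc, ← C_mul, hcc, C_1, one_mul] at hrep2

end Aux


open MvPolynomial in
/-- Every polynomial `p ∈ ℝ[x_1,…,x_d]` of degree `m` admits a real symmetric
determinantal representation `det(A_0 + x_1 A_1 + ⋯ + x_d A_d) = p(x)` of some
size `n ≥ m`. -/
theorem stmt9 {d m : ℕ} (p : MvPolynomial (Fin d) ℝ) (hdeg : p.totalDegree = m) :
    ∃ n : ℕ, m ≤ n ∧
      ∃ (A0 : Matrix (Fin n) (Fin n) ℝ) (A : Fin d → Matrix (Fin n) (Fin n) ℝ),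
        A0.IsSymm ∧ (∀ i, (A i).IsSymm) ∧
        Matrix.det (Matrix.of fun k l =>
          C (A0 k l) + ∑ i, X i * C (A i k l)) = p := by
  have hrep : DRep p := by
    have h0 := main (d := d) m (I := Unit)
      (Matrix.of fun _ _ => p) (by rw [Matrix.IsSymm]; rfl)
      (fun _ _ => le_of_eq hdeg)
    rwa [Matrix.det_unique, Matrix.of_apply] at h0
  obtain ⟨I, hF, hD, P, hPs, hPd, hPdet⟩ := hrep
  letI := hF; letI := hD
  set Q : Matrix (I ⊕ Fin m) (I ⊕ Fin m) (MvPolynomial (Fin d) ℝ) :=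
    fromBlocks P 0 0 (1 : Matrix (Fin m) (Fin m) (MvPolynomial (Fin d) ℝ)) with hQ
  have hQs : Q.IsSymm := by
    rw [Matrix.IsSymm, hQ, fromBlocks_transpose, transpose_zero, transpose_zero,
      transpose_one, hPs]
  have hQd : ∀ i j, (Q i j).totalDegree ≤ 1 := by
    rintro (i | i) (j | j)
    · exact hPd i j
    · simp [hQ, fromBlocks]
    · simp [hQ, fromBlocks]
    · rw [hQ]
      simp only [fromBlocks_apply₂₂, Matrix.one_apply]
      split
      · rw [totalDegree_one]; omega
      · rw [totalDegree_zero]; omega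
  have hQdet : Q.det = p := by
    rw [hQ, det_fromBlocks_zero₂₁, det_one, mul_one, hPdet]
  set n : ℕ := Fintype.card (I ⊕ Fin m) with hn
  have hmn : m ≤ n := by
    rw [hn, Fintype.card_sum, Fintype.card_fin]
    omega
  set eqv : (I ⊕ Fin m) ≃ Fin n := Fintype.equivFin (I ⊕ Fin m) with heqv
  set P' : Matrix (Fin n) (Fin n) (MvPolynomial (Fin d) ℝ) :=
    Q.submatrix eqv.symm eqv.symm with hP'
  have hP's : P'.IsSymm := hQs.submatrix eqv.symm
  have hP'd : ∀ k l, (P' k l).totalDegree ≤ 1 := fun k l => hQd _ _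
  have hP'det : P'.det = p := by
    rw [hP', Matrix.det_submatrix_equiv_self, hQdet]
  refine ⟨n, hmn, Matrix.of fun k l => coeff 0 (P' k l),
    fun i => Matrix.of fun k l => coeff (Finsupp.single i 1) (P' k l), ?_, ?_, ?_⟩
  · refine Matrix.ext fun k l => ?_
    show coeff 0 (P' l k) = coeff 0 (P' k l)
    rw [hP's.apply]
  · intro i
    refine Matrix.ext fun k l => ?_
    show coeff (Finsupp.single i 1) (P' l k) = coeff (Finsupp.single i 1) (P' k l)
    rw [hP's.apply]
  · have hmat : (Matrix.of fun k l =>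
        (C ((Matrix.of fun k l => coeff 0 (P' k l)) k l) : MvPolynomial (Fin d) ℝ)
          + ∑ i, X i * C ((Matrix.of fun k l => coeff (Finsupp.single i 1) (P' k l)) k l))
        = P' := by
      refine Matrix.ext fun k l => ?_
      simp only [Matrix.of_apply]
      exact (affine_eq (P' k l) (hP'd k l)).symm
    rw [hmat, hP'det]
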